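/- Let K be a differential field of characteristic 0 and A ∈ M_n(K[∂]) a non-degenerate matrix differential operator. Then A is invertible in the ring M_n(K[∂]) if and only if the degree d(A) of its Dieudonné determinant is zero. Moreover, d(A) ≥ 0 always. -/

import Mathlib

/-- The ring of differential operators K[∂] over a differential field (K, d),
characterized abstractly. -/
structure DiffOpRing (K : Type) [Field K] (d : K → K) (R : Type) [Ring R] where
  ι : K →+* R
  dop : R
  comm : ∀ a : K, dop * ι a = ι a * dop + ι (d a)
  repr : ∀ r : R, ∃! c : ℕ →₀ K, r = c.sum fun i a => ι a * dop ^ i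

/-- The coefficients of a differential operator. -/
noncomputable def DiffOpRing.coeff {K : Type} [Field K] {d : K → K} {R : Type} [Ring R]
    (S : DiffOpRing K d R) (r : R) : ℕ →₀ K := (S.repr r).choose

/-- The order of a differential operator. -/
noncomputable def DiffOpRing.ord {K : Type} [Field K] {d : K → K} {R : Type} [Ring R]
    (S : DiffOpRing K d R) (r : R) : ℕ := (S.coeff r).support.sup id

/-- A matrix differential operator is non-degenerate (non-zero Dieudonné determinant)
iff it has trivial right kernel over K[∂]. -/
def Nondeg {n : ℕ} {R : Type} [Ring R] (A : Matrix (Fin n) (Fin n) R) : Prop :=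
  ∀ X : Fin n → R, A.mulVec X = 0 → X = 0

namespace Aux

variable {K : Type} [Field K] {d : K → K} {R : Type} [Ring R] (S : DiffOpRing K d R)

local notation "E" => fun (i : ℕ) (a : K) => S.ι a * S.dop ^ i

lemma coeff_spec (r : R) : r = (S.coeff r).sum fun i a => S.ι a * S.dop ^ i :=
  (S.repr r).choose_spec.1

lemma coeff_unique {r : R} {c : ℕ →₀ K} (h : r = c.sum fun i a => S.ι a * S.dop ^ i) :
    S.coeff r = c :=
  ((S.repr r).choose_spec.2 c h).symm

lemma sum_E_add (c c' : ℕ →₀ K) :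
    ((c + c').sum fun i a => S.ι a * S.dop ^ i)
      = (c.sum fun i a => S.ι a * S.dop ^ i) + c'.sum fun i a => S.ι a * S.dop ^ i := by
  apply Finsupp.sum_add_index
  · intro i _; simp
  · intro i _ a b; rw [map_add, add_mul]

lemma coeff_add (r s : R) : S.coeff (r + s) = S.coeff r + S.coeff s := by
  apply coeff_unique
  rw [sum_E_add, ← coeff_spec, ← coeff_spec]

lemma coeff_E (i : ℕ) (a : K) : S.coeff (S.ι a * S.dop ^ i) = Finsupp.single i a := by
  apply coeff_unique
  rw [Finsupp.sum_single_index]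
  simp

lemma coeff_zero : S.coeff (0 : R) = 0 := coeff_unique S (by simp)

lemma eq_zero_of_coeff (r : R) (h : S.coeff r = 0) : r = 0 := by
  have := coeff_spec S r; rw [h] at this; simpa using this

lemma coeff_neg (r : R) : S.coeff (-r) = - S.coeff r := by
  have := coeff_add S r (-r)
  simp only [add_neg_cancel, coeff_zero] at this
  exact (add_eq_zero_iff_neg_eq.mp this.symm).symm

end Aux

namespace Aux

variable {K : Type} [Field K] {d : K → K} {R : Type} [Ring R] (S : DiffOpRing K d R)

/-- coeff as an additive hom -/
noncomputable def coeffHom : R →+ (ℕ →₀ K) := AddMonoidHom.mk' S.coeff (coeff_add S)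

lemma coeff_sub (r s : R) : S.coeff (r - s) = S.coeff r - S.coeff s :=
  map_sub (coeffHom S) r s

/-- `Bd m r` : all coefficients above `m` vanish. -/
def Bd (m : ℕ) (r : R) : Prop := ∀ j, m < j → S.coeff r j = 0

lemma bd_ord (r : R) : Bd S (S.ord r) r := by
  intro j hj
  by_contra h
  have h2 : id j ≤ (S.coeff r).support.sup id := Finset.le_sup (Finsupp.mem_support_iff.mpr h)
  rw [DiffOpRing.ord] at hj
  simp only [id_eq] at h2
  omega

lemma ord_le_of_bd {m : ℕ} {r : R} (h : Bd S m r) : S.ord r ≤ m := by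
  show (S.coeff r).support.sup id ≤ m
  apply Finset.sup_le
  intro j hj
  simp only [id_eq]
  by_contra hc
  exact Finsupp.mem_support_iff.mp hj (h j (by omega))

lemma lc_ne_zero {r : R} (h : r ≠ 0) : S.coeff r (S.ord r) ≠ 0 := by
  have hs : (S.coeff r).support.Nonempty := by
    rw [Finsupp.support_nonempty_iff]
    intro hc; exact h (eq_zero_of_coeff S r hc)
  obtain ⟨b, hb, he⟩ := Finset.exists_mem_eq_sup _ hs id
  rw [DiffOpRing.ord, he]
  exact Finsupp.mem_support_iff.mp hb

lemma hd0 (hd_add : ∀ a b : K, d (a + b) = d a + d b) : d 0 = 0 := by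
  have := hd_add 0 0; simp at this; exact this

lemma dop_mul_E (i : ℕ) (a : K) :
    S.dop * (S.ι a * S.dop ^ i) = S.ι a * S.dop ^ (i+1) + S.ι (d a) * S.dop ^ i := by
  rw [← mul_assoc, S.comm, add_mul, pow_succ', mul_assoc]

variable (hd_add : ∀ a b : K, d (a + b) = d a + d b)

include hd_add in
lemma coeff_dop_mul (r : R) :
    S.coeff (S.dop * r) = (S.coeff r).mapDomain (· + 1)
      + (S.coeff r).mapRange d (hd0 hd_add) := by
  apply coeff_unique
  rw [sum_E_add]
  rw [Finsupp.sum_mapDomain_index (by intro b; simp) (by intro b m1 m2; rw [map_add, add_mul])]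
  rw [Finsupp.sum_mapRange_index (by intro i; simp)]
  conv_lhs => rw [coeff_spec S r]
  rw [Finsupp.mul_sum, ← Finsupp.sum_add]
  exact Finsupp.sum_congr fun i _ => dop_mul_E S i _
include hd_add in
lemma coeff_dop_pow_mul (k : ℕ) (r : R) (m : ℕ) (hb : Bd S m r) :
    Bd S (m + k) (S.dop ^ k * r) ∧ S.coeff (S.dop ^ k * r) (m + k) = S.coeff r m := by
  induction k with
  | zero => simpa using hb
  | succ k ih =>
    have hs : S.dop ^ (k+1) * r = S.dop * (S.dop ^ k * r) := by
      rw [pow_succ', mul_assoc]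
    have key : ∀ j, S.coeff (S.dop ^ (k+1) * r) j
        = (S.coeff (S.dop ^ k * r)).mapDomain (· + 1) j
          + d (S.coeff (S.dop ^ k * r) j) := by
      intro j
      rw [hs, coeff_dop_mul S hd_add]
      simp [Finsupp.mapRange_apply]
    have hmd : ∀ j, (S.coeff (S.dop ^ k * r)).mapDomain (· + 1) j
        = if j = 0 then 0 else S.coeff (S.dop ^ k * r) (j - 1) := by
      intro j
      cases j with
      | zero =>
        simp only [if_pos rfl]
        apply Finsupp.mapDomain_notin_range
        simp
      | succ t =>
        simp only [Nat.succ_ne_zero, if_neg, Nat.add_sub_cancel]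
        exact Finsupp.mapDomain_apply (fun a b => by omega) _ t
    constructor
    · intro j hj
      rw [key j, hmd j]
      have h1 : S.coeff (S.dop ^ k * r) j = 0 := ih.1 j (by omega)
      rw [h1, hd0 hd_add, add_zero]
      split
      · rfl
      · exact ih.1 (j-1) (by omega)
    · rw [key, hmd]
      have h1 : S.coeff (S.dop ^ k * r) (m + (k+1)) = 0 := ih.1 _ (by omega)
      rw [h1, hd0 hd_add, add_zero, if_neg (by omega)]
      have : m + (k + 1) - 1 = m + k := by omega
      rw [this, ih.2]

lemma coeff_iota_mul (c : K) (r : R) (j : ℕ) :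
    S.coeff (S.ι c * r) j = c * S.coeff r j := by
  have : S.coeff (S.ι c * r) = (S.coeff r).mapRange (c * ·) (mul_zero c) := by
    apply coeff_unique
    rw [Finsupp.sum_mapRange_index (by intro i; simp)]
    conv_lhs => rw [coeff_spec S r]
    rw [Finsupp.mul_sum]
    apply Finsupp.sum_congr
    intro i _
    rw [← mul_assoc, ← map_mul]
  rw [this, Finsupp.mapRange_apply]

include hd_add in
lemma coeff_E_mul (k : ℕ) (c : K) (r : R) (m : ℕ) (hb : Bd S m r) :
    Bd S (k + m) (S.ι c * S.dop ^ k * r)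
      ∧ S.coeff (S.ι c * S.dop ^ k * r) (k + m) = c * S.coeff r m := by
  have hs : S.ι c * S.dop ^ k * r = S.ι c * (S.dop ^ k * r) := mul_assoc _ _ _
  obtain ⟨h1, h2⟩ := coeff_dop_pow_mul S hd_add k r m hb
  constructor
  · intro j hj
    rw [hs, coeff_iota_mul, h1 j (by omega), mul_zero]
  · rw [hs, coeff_iota_mul, Nat.add_comm k m, h2]

include hd_add in
lemma coeff_mul (x y : R) (m l : ℕ) (hx : Bd S m x) (hy : Bd S l y) :
    Bd S (m + l) (x * y) ∧ S.coeff (x * y) (m + l) = S.coeff x m * S.coeff y l := by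
  have hxy : x * y = ∑ i ∈ (S.coeff x).support, (S.ι (S.coeff x i) * S.dop ^ i) * y := by
    conv_lhs => rw [coeff_spec S x]
    rw [Finsupp.sum, Finset.sum_mul]
  have hco : ∀ j, S.coeff (x * y) j
      = ∑ i ∈ (S.coeff x).support, S.coeff ((S.ι (S.coeff x i) * S.dop ^ i) * y) j := by
    intro j
    rw [hxy]
    have hms : S.coeff (∑ i ∈ (S.coeff x).support, S.ι (S.coeff x i) * S.dop ^ i * y)
        = ∑ i ∈ (S.coeff x).support, S.coeff (S.ι (S.coeff x i) * S.dop ^ i * y) :=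
      map_sum (coeffHom S) _ _
    rw [hms, Finset.sum_apply']
  have hsupp : ∀ i ∈ (S.coeff x).support, i ≤ m := by
    intro i hi
    by_contra h
    exact Finsupp.mem_support_iff.mp hi (hx i (by omega))
  constructor
  · intro j hj
    rw [hco]
    apply Finset.sum_eq_zero
    intro i hi
    exact (coeff_E_mul S hd_add i _ y l hy).1 j (by have := hsupp i hi; omega)
  · rw [hco]
    rw [Finset.sum_eq_single m]
    · by_cases hm : m ∈ (S.coeff x).support
      · exact (coeff_E_mul S hd_add m _ y l hy).2
      · have h0 : S.coeff x m = 0 := by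
          by_contra h; exact hm (Finsupp.mem_support_iff.mpr h)
        rw [h0, zero_mul]
        simp [map_zero, coeff_zero S]
    · intro i hi hne
      have : i < m := lt_of_le_of_ne (hsupp i hi) hne
      exact (coeff_E_mul S hd_add i _ y l hy).1 (m + l) (by omega)
    · intro hm
      have h0 : S.coeff x m = 0 := by
        by_contra h; exact hm (Finsupp.mem_support_iff.mpr h)
      rw [h0]
      simp [map_zero, coeff_zero S]

include S hd_add in
lemma mul_ne_zero' {x y : R} (hx : x ≠ 0) (hy : y ≠ 0) : x * y ≠ 0 := by
  intro h
  have := (coeff_mul S hd_add x y (S.ord x) (S.ord y) (bd_ord S x) (bd_ord S y)).2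
  rw [h, coeff_zero] at this
  exact (mul_ne_zero (lc_ne_zero S hx) (lc_ne_zero S hy)) this.symm

include hd_add in
/-- Left division -/
lemma div_left {b : R} (hb : b ≠ 0) (a : R) :
    ∃ q : R, ∀ j, S.ord b ≤ j → S.coeff (a - q * b) j = 0 := by
  generalize hN : S.ord a = N
  have hle : S.ord a ≤ N := le_of_eq hN
  clear hN
  induction N using Nat.strong_induction_on generalizing a with
  | _ N ih =>
  by_cases h : ∀ j, S.ord b ≤ j → S.coeff a j = 0
  · exact ⟨0, by intro j hj; rw [zero_mul, sub_zero]; exact h j hj⟩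
  push_neg at h
  obtain ⟨j0, hj0, hcj0⟩ := h
  have ha : a ≠ 0 := by
    intro hz; rw [hz, coeff_zero] at hcj0; exact hcj0 rfl
  have hjo : j0 ≤ S.ord a := by
    by_contra h
    exact hcj0 (bd_ord S a j0 (by omega))
  have hba : S.ord b ≤ S.ord a := le_trans hj0 hjo
  set k := S.ord a - S.ord b with hk
  set c := S.coeff a (S.ord a) * (S.coeff b (S.ord b))⁻¹ with hc
  set q0 : R := S.ι c * S.dop ^ k with hq0
  obtain ⟨hbd, hcf⟩ := coeff_E_mul S hd_add k c b (S.ord b) (bd_ord S b)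
  have hbd2 : ∀ j, k + S.ord b < j → S.coeff (q0 * b) j = 0 := by
    intro j hj; rw [hq0]; exact hbd j hj
  have hcf2 : S.coeff (q0 * b) (k + S.ord b) = c * S.coeff b (S.ord b) := by
    rw [hq0]; exact hcf
  have hkb : k + S.ord b = S.ord a := by omega
  have key : ∀ j, S.ord a ≤ j → S.coeff (a - q0 * b) j = 0 := by
    intro j hj
    rcases eq_or_lt_of_le hj with hje | hjl
    · rw [coeff_sub, Finsupp.sub_apply, ← hje, ← hkb, hcf2, hc]
      rw [mul_assoc, inv_mul_cancel₀ (lc_ne_zero S hb), mul_one, hkb, sub_self]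
    · rw [coeff_sub, Finsupp.sub_apply, bd_ord S a j hjl, hbd2 j (by omega), sub_self]
  set a' := a - q0 * b with ha'
  by_cases hz : a' = 0
  · exact ⟨q0, by rw [← ha']; intro j hj; rw [hz, coeff_zero]; rfl⟩
  · have hlt : S.ord a' < S.ord a := by
      by_contra hge
      exact lc_ne_zero S hz (key _ (by omega))
    obtain ⟨q', hq'⟩ := ih (S.ord a') (by omega) a' (le_refl _)
    refine ⟨q0 + q', fun j hj => ?_⟩
    have : a - (q0 + q') * b = a' - q' * b := by rw [ha', add_mul, ← sub_sub]
    rw [this]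
    exact hq' j hj

include hd_add in
/-- Right division -/
lemma div_right {b : R} (hb : b ≠ 0) (a : R) :
    ∃ q : R, ∀ j, S.ord b ≤ j → S.coeff (a - b * q) j = 0 := by
  generalize hN : S.ord a = N
  have hle : S.ord a ≤ N := le_of_eq hN
  clear hN
  induction N using Nat.strong_induction_on generalizing a with
  | _ N ih =>
  by_cases h : ∀ j, S.ord b ≤ j → S.coeff a j = 0
  · exact ⟨0, by intro j hj; rw [mul_zero, sub_zero]; exact h j hj⟩
  push_neg at h
  obtain ⟨j0, hj0, hcj0⟩ := h
  have ha : a ≠ 0 := by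
    intro hz; rw [hz, coeff_zero] at hcj0; exact hcj0 rfl
  have hjo : j0 ≤ S.ord a := by
    by_contra h
    exact hcj0 (bd_ord S a j0 (by omega))
  have hba : S.ord b ≤ S.ord a := le_trans hj0 hjo
  set k := S.ord a - S.ord b with hk
  set c := (S.coeff b (S.ord b))⁻¹ * S.coeff a (S.ord a) with hc
  set q0 : R := S.ι c * S.dop ^ k with hq0
  obtain ⟨hbd, hcf⟩ := coeff_mul S hd_add b q0 (S.ord b) k (bd_ord S b)
    (by intro j hj
        rw [hq0, coeff_E]
        exact Finsupp.single_eq_of_ne (by omega))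
  have hq0c : S.coeff q0 k = c := by rw [hq0, coeff_E]; exact Finsupp.single_eq_same
  have hkb : S.ord b + k = S.ord a := by omega
  have key : ∀ j, S.ord a ≤ j → S.coeff (a - b * q0) j = 0 := by
    intro j hj
    rcases eq_or_lt_of_le hj with hje | hjl
    · rw [coeff_sub, Finsupp.sub_apply, ← hje, ← hkb, hcf, hq0c, hc]
      rw [← mul_assoc, mul_inv_cancel₀ (lc_ne_zero S hb), one_mul, hkb, sub_self]
    · rw [coeff_sub, Finsupp.sub_apply, bd_ord S a j hjl, hbd j (by omega), sub_self]
  set a' := a - b * q0 with ha'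
  by_cases hz : a' = 0
  · exact ⟨q0, by rw [← ha']; intro j hj; rw [hz, coeff_zero]; rfl⟩
  · have hlt : S.ord a' < S.ord a := by
      by_contra hge
      exact lc_ne_zero S hz (key _ (by omega))
    obtain ⟨q', hq'⟩ := ih (S.ord a') (by omega) a' (le_refl _)
    refine ⟨q0 + q', fun j hj => ?_⟩
    have : a - b * (q0 + q') = a' - b * q' := by rw [ha', mul_add, ← sub_sub]
    rw [this]
    exact hq' j hj

end Aux

namespace Aux

variable {K : Type} [Field K] {d : K → K} {R : Type} [Ring R] (S : DiffOpRing K d R)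

lemma coeff_one : S.coeff (1 : R) = Finsupp.single 0 1 := by
  have := coeff_E S 0 (1 : K)
  simpa using this

include S in
lemma one_ne : (1 : R) ≠ 0 := by
  intro h
  have h1 := coeff_one S
  rw [h, coeff_zero] at h1
  have : (Finsupp.single 0 (1:K)) 0 = 0 := by rw [← h1]; rfl
  rw [Finsupp.single_eq_same] at this
  exact one_ne_zero this

lemma ord_one : S.ord (1 : R) = 0 := by
  apply Nat.le_zero.mp
  apply ord_le_of_bd
  intro j hj
  rw [coeff_one]
  exact Finsupp.single_eq_of_ne (by omega)

lemma eq_iota_of_ord_eq_zero {r : R} (h : S.ord r = 0) : r = S.ι (S.coeff r 0) := by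
  have hc : S.coeff r = Finsupp.single 0 (S.coeff r 0) := by
    ext j
    cases j with
    | zero => rw [Finsupp.single_eq_same]
    | succ t =>
      rw [bd_ord S r (t+1) (by omega), Finsupp.single_eq_of_ne (by omega)]
  conv_lhs => rw [coeff_spec S r, hc]
  rw [Finsupp.sum_single_index (by simp)]
  simp

variable {m : ℕ}

/-- permutation matrix: column `j` has a `1` in row `σ j`. -/
def Pm (σ : Equiv.Perm (Fin m)) : Matrix (Fin m) (Fin m) R :=
  Matrix.of fun i j => if σ j = i then 1 else 0

lemma mul_Pm (M : Matrix (Fin m) (Fin m) R) (σ : Equiv.Perm (Fin m)) (i j : Fin m) :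
    (M * Pm σ : Matrix (Fin m) (Fin m) R) i j = M i (σ j) := by
  rw [Matrix.mul_apply]
  rw [Finset.sum_congr rfl (g := fun k => if k = σ j then M i k else 0)
    (by intro k _
        simp only [Pm, Matrix.of_apply]
        by_cases h : σ j = k
        · rw [if_pos h, if_pos h.symm, mul_one]
        · rw [if_neg h, if_neg (fun hh => h hh.symm), mul_zero])]
  rw [Finset.sum_ite_eq' _ (σ j) (fun k => M i k)]
  rw [if_pos (Finset.mem_univ _)]

lemma Pm_mul (σ : Equiv.Perm (Fin m)) (M : Matrix (Fin m) (Fin m) R) (i j : Fin m) :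
    (Pm σ * M : Matrix (Fin m) (Fin m) R) i j = M (σ⁻¹ i) j := by
  rw [Matrix.mul_apply]
  rw [Finset.sum_congr rfl (g := fun k => if k = σ⁻¹ i then M k j else 0)
    (by intro k _
        simp only [Pm, Matrix.of_apply]
        by_cases h : σ k = i
        · rw [if_pos h, if_pos (by rw [← h]; simp), one_mul]
        · rw [if_neg h, if_neg (by intro hh; rw [hh] at h; simp at h), zero_mul])]
  rw [Finset.sum_ite_eq' _ (σ⁻¹ i) (fun k => M k j)]
  rw [if_pos (Finset.mem_univ _)]

lemma Pm_mul_Pm (σ τ : Equiv.Perm (Fin m)) :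
    (Pm σ * Pm τ : Matrix (Fin m) (Fin m) R) = Pm (σ * τ) := by
  ext i j
  rw [mul_Pm]
  simp only [Pm, Matrix.of_apply, Equiv.Perm.mul_apply]
  rfl

lemma Pm_one : (Pm 1 : Matrix (Fin m) (Fin m) R) = 1 := by
  ext i j
  simp only [Pm, Matrix.of_apply, Equiv.Perm.one_apply, Matrix.one_apply]
  exact if_congr eq_comm rfl rfl

lemma isUnit_Pm (σ : Equiv.Perm (Fin m)) : IsUnit (Pm σ : Matrix (Fin m) (Fin m) R) := by
  refine ⟨⟨Pm σ, Pm σ⁻¹, ?_, ?_⟩, rfl⟩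
  · rw [Pm_mul_Pm, mul_inv_cancel, Pm_one]
  · rw [Pm_mul_Pm, inv_mul_cancel, Pm_one]

lemma Pm_sandwich (σ τ : Equiv.Perm (Fin m)) (B : Matrix (Fin m) (Fin m) R) (i j : Fin m) :
    (Pm σ * B * Pm τ : Matrix (Fin m) (Fin m) R) i j = B (σ⁻¹ i) (τ j) := by
  rw [mul_Pm, Pm_mul]

end Aux

namespace Aux

variable {K : Type} [Field K] {d : K → K} {R : Type} [Ring R] (S : DiffOpRing K d R)
variable {m : ℕ}

lemma isUnit_nondeg {P : Matrix (Fin m) (Fin m) R} (h : IsUnit P) : Nondeg P := by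
  obtain ⟨u, hu⟩ := h
  intro X hX
  have h2 : (u⁻¹.val * P).mulVec X = 0 := by
    rw [← Matrix.mulVec_mulVec, hX, Matrix.mulVec_zero]
  rwa [← hu, Units.inv_mul, Matrix.one_mulVec] at h2

lemma nondeg_mul {P Q : Matrix (Fin m) (Fin m) R} (hP : Nondeg P) (hQ : Nondeg Q) :
    Nondeg (P * Q) := by
  intro X hX
  rw [← Matrix.mulVec_mulVec] at hX
  exact hQ X (hP _ hX)

lemma mulVec_single (B : Matrix (Fin m) (Fin m) R) (k : Fin m) (i : Fin m) :
    B.mulVec (Pi.single k 1) i = B i k := by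
  rw [Matrix.mulVec, dotProduct]
  rw [Finset.sum_congr rfl (g := fun j => if j = k then B i j else 0)
    (by intro j _
        by_cases h : j = k
        · subst h; simp
        · simp [h, Pi.single_eq_of_ne h])]
  rw [Finset.sum_ite_eq' _ k (fun j => B i j), if_pos (Finset.mem_univ _)]

variable (hd_add : ∀ a b : K, d (a + b) = d a + d b)

include S hd_add in
lemma nondeg_of_upper {T : Matrix (Fin m) (Fin m) R}
    (hlow : ∀ i j : Fin m, j < i → T i j = 0) (hdiag : ∀ i, T i i ≠ 0) : Nondeg T := by
  intro X hX
  by_contra hne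
  classical
  have hs : (Finset.univ.filter (fun j => X j ≠ 0)).Nonempty := by
    rw [Finset.filter_nonempty_iff]
    simpa [funext_iff] using hne
  set j0 := (Finset.univ.filter (fun j => X j ≠ 0)).max' hs with hj0
  have hmem := (Finset.univ.filter (fun j => X j ≠ 0)).max'_mem hs
  rw [Finset.mem_filter] at hmem
  have h0 : T.mulVec X j0 = 0 := congrFun hX j0
  rw [Matrix.mulVec, dotProduct] at h0
  rw [Finset.sum_eq_single j0 (by
      intro k _ hk
      rcases lt_or_gt_of_ne hk with hlt | hgt
      · rw [hlow j0 k hlt, zero_mul]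
      · have hxz : X k = 0 := by
          by_contra hxk
          have := Finset.le_max' (Finset.univ.filter (fun j => X j ≠ 0)) k (Finset.mem_filter.mpr ⟨Finset.mem_univ k, show X k ≠ 0 from hxk⟩)
          rw [← hj0] at this
          exact absurd hgt (not_lt.mpr this)
        rw [hxz, mul_zero])
    (fun h => absurd (Finset.mem_univ j0) h)] at h0
  exact mul_ne_zero' S hd_add (hdiag j0) hmem.2 h0

include S hd_add in
lemma nondeg_of_lower {T : Matrix (Fin m) (Fin m) R}
    (hup : ∀ i j : Fin m, i < j → T i j = 0) (hdiag : ∀ i, T i i ≠ 0) : Nondeg T := by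
  intro X hX
  by_contra hne
  classical
  have hs : (Finset.univ.filter (fun j => X j ≠ 0)).Nonempty := by
    rw [Finset.filter_nonempty_iff]
    simpa [funext_iff] using hne
  set j0 := (Finset.univ.filter (fun j => X j ≠ 0)).min' hs with hj0
  have hmem := (Finset.univ.filter (fun j => X j ≠ 0)).min'_mem hs
  rw [Finset.mem_filter] at hmem
  have h0 : T.mulVec X j0 = 0 := congrFun hX j0
  rw [Matrix.mulVec, dotProduct] at h0
  rw [Finset.sum_eq_single j0 (by
      intro k _ hk
      rcases lt_or_gt_of_ne hk with hlt | hgt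
      · have hxz : X k = 0 := by
          by_contra hxk
          have := Finset.min'_le (Finset.univ.filter (fun j => X j ≠ 0)) k (Finset.mem_filter.mpr ⟨Finset.mem_univ k, show X k ≠ 0 from hxk⟩)
          rw [← hj0] at this
          exact absurd hlt (not_lt.mpr this)
        rw [hxz, mul_zero]
      · rw [hup j0 k hgt, zero_mul])
    (fun h => absurd (Finset.mem_univ j0) h)] at h0
  exact mul_ne_zero' S hd_add (hdiag j0) hmem.2 h0

lemma sum_std_apply (F : Finset (Fin m)) (k : Fin m) (q : Fin m → R) (a b : Fin m) :
    (∑ i ∈ F, Matrix.single i k (q i)) a b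
      = if a ∈ F ∧ b = k then q a else 0 := by
  rw [Matrix.sum_apply]
  by_cases haF : a ∈ F
  · rw [Finset.sum_eq_single_of_mem a haF
      (fun i _ hi => Matrix.single_apply_of_row_ne hi _ _ _)]
    by_cases hbk : b = k
    · subst hbk
      rw [Matrix.single_apply_same, if_pos ⟨haF, rfl⟩]
    · rw [Matrix.single_apply_of_col_ne _ _ (fun h => hbk h.symm) _,
        if_neg (by tauto)]
  · rw [Finset.sum_eq_zero
      (by intro i hi
          exact Matrix.single_apply_of_row_ne (by rintro rfl; exact haF hi) _ _ _),
      if_neg (by tauto)]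

/-- Row-clearing elementary matrix: adds `q i * (row k)` to row `i` for each `i > k`. -/
def rowClear (k : Fin m) (q : Fin m → R) : Matrix (Fin m) (Fin m) R :=
  1 + ∑ i ∈ Finset.univ.filter (fun i => k < i), Matrix.single i k (q i)

/-- Column-clearing elementary matrix: adds `(col k) * q j` to column `j` for each `j > k`. -/
def colClear (k : Fin m) (q : Fin m → R) : Matrix (Fin m) (Fin m) R :=
  1 + ∑ j ∈ Finset.univ.filter (fun j => k < j), Matrix.single k j (q j)

lemma rowClear_apply (k : Fin m) (q : Fin m → R) (a b : Fin m) :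
    rowClear k q a b = (1 : Matrix (Fin m) (Fin m) R) a b
      + if k < a ∧ b = k then q a else 0 := by
  rw [rowClear, Matrix.add_apply, sum_std_apply]
  congr 1
  simp

lemma colClear_apply (k : Fin m) (q : Fin m → R) (a b : Fin m) :
    colClear k q a b = (1 : Matrix (Fin m) (Fin m) R) a b
      + if k < b ∧ a = k then q b else 0 := by
  rw [colClear, Matrix.add_apply, Matrix.sum_apply]
  congr 1
  by_cases hb : k < b
  · by_cases ha : a = k
    · subst ha
      rw [Finset.sum_eq_single_of_mem b (by simp [hb])
        (fun i _ hi => Matrix.single_apply_of_col_ne _ _ hi _),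
        Matrix.single_apply_same, if_pos ⟨hb, rfl⟩]
    · rw [Finset.sum_eq_zero
        (fun i hi => Matrix.single_apply_of_row_ne (fun h => ha h.symm) _ _ _),
        if_neg (by tauto)]
  · rw [Finset.sum_eq_zero
      (by intro i hi
          exact Matrix.single_apply_of_col_ne _ _
            (by rintro rfl; exact hb (Finset.mem_filter.mp hi).2) _),
      if_neg (by tauto)]

lemma rowClear_mul_rowClear (k : Fin m) (q q' : Fin m → R) :
    rowClear k q * rowClear k q' = rowClear k (fun i => q i + q' i) := by
  rw [rowClear, rowClear, rowClear, add_mul, mul_add, mul_add, one_mul, mul_one,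
    Finset.sum_mul_sum]
  have hz : ∀ i ∈ Finset.univ.filter (fun i => k < i),
      ∀ j ∈ Finset.univ.filter (fun j => k < j),
      Matrix.single i k (q i) * Matrix.single j k (q' j) = 0 := by
    intro i hi j hj
    apply Matrix.single_mul_single_of_ne
    exact ne_of_lt (Finset.mem_filter.mp hj).2
  rw [Finset.sum_congr rfl (fun i hi => Finset.sum_congr rfl (fun j hj => hz i hi j hj))]
  simp only [Finset.sum_const_zero]
  have hsum : ∑ i ∈ Finset.univ.filter (fun i => k < i),
      Matrix.single i k (q i + q' i)
      = (∑ i ∈ Finset.univ.filter (fun i => k < i), Matrix.single i k (q i))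
        + ∑ i ∈ Finset.univ.filter (fun i => k < i), Matrix.single i k (q' i) := by
    rw [← Finset.sum_add_distrib]
    exact Finset.sum_congr rfl (fun i _ => Matrix.single_add _ _ _ _)
  rw [hsum, one_mul]
  abel

lemma colClear_mul_colClear (k : Fin m) (q q' : Fin m → R) :
    colClear k q * colClear k q' = colClear k (fun j => q j + q' j) := by
  rw [colClear, colClear, colClear, add_mul, mul_add, mul_add, one_mul, mul_one,
    Finset.sum_mul_sum]
  have hz : ∀ i ∈ Finset.univ.filter (fun i => k < i),
      ∀ j ∈ Finset.univ.filter (fun j => k < j),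
      Matrix.single k i (q i) * Matrix.single k j (q' j) = 0 := by
    intro i hi j hj
    apply Matrix.single_mul_single_of_ne
    exact ne_of_gt (Finset.mem_filter.mp hi).2
  rw [Finset.sum_congr rfl (fun i hi => Finset.sum_congr rfl (fun j hj => hz i hi j hj))]
  simp only [Finset.sum_const_zero]
  have hsum : ∑ j ∈ Finset.univ.filter (fun j => k < j),
      Matrix.single k j (q j + q' j)
      = (∑ j ∈ Finset.univ.filter (fun j => k < j), Matrix.single k j (q j))
        + ∑ j ∈ Finset.univ.filter (fun j => k < j), Matrix.single k j (q' j) := by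
    rw [← Finset.sum_add_distrib]
    exact Finset.sum_congr rfl (fun i _ => Matrix.single_add _ _ _ _)
  rw [hsum, one_mul]
  abel

lemma rowClear_zero (k : Fin m) : rowClear k (fun _ => (0 : R)) = 1 := by
  rw [rowClear]
  simp [Matrix.single_zero]

lemma colClear_zero (k : Fin m) : colClear k (fun _ => (0 : R)) = 1 := by
  rw [colClear]
  simp [Matrix.single_zero]

lemma isUnit_rowClear (k : Fin m) (q : Fin m → R) : IsUnit (rowClear k q) := by
  refine ⟨⟨rowClear k q, rowClear k (fun i => -q i), ?_, ?_⟩, rfl⟩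
  · rw [rowClear_mul_rowClear]
    simp only [add_neg_cancel]
    exact rowClear_zero k
  · rw [rowClear_mul_rowClear]
    simp only [neg_add_cancel]
    exact rowClear_zero k

lemma isUnit_colClear (k : Fin m) (q : Fin m → R) : IsUnit (colClear k q) := by
  refine ⟨⟨colClear k q, colClear k (fun i => -q i), ?_, ?_⟩, rfl⟩
  · rw [colClear_mul_colClear]
    simp only [add_neg_cancel]
    exact colClear_zero k
  · rw [colClear_mul_colClear]
    simp only [neg_add_cancel]
    exact colClear_zero k

lemma rowClear_lower (k : Fin m) (q : Fin m → R) (a b : Fin m) (h : a < b) :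
    rowClear k q a b = 0 := by
  rw [rowClear_apply, Matrix.one_apply_ne (ne_of_lt h),
    if_neg (by rintro ⟨h1, rfl⟩; exact absurd h (not_lt.mpr (le_of_lt h1))), add_zero]

lemma rowClear_diag (k : Fin m) (q : Fin m → R) (a : Fin m) :
    rowClear k q a a = 1 := by
  rw [rowClear_apply, Matrix.one_apply_eq,
    if_neg (by rintro ⟨h1, rfl⟩; exact lt_irrefl _ h1), add_zero]

lemma colClear_upper (k : Fin m) (q : Fin m → R) (a b : Fin m) (h : b < a) :
    colClear k q a b = 0 := by
  rw [colClear_apply, Matrix.one_apply_ne (ne_of_gt h),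
    if_neg (by rintro ⟨h1, rfl⟩; exact absurd h (not_lt.mpr (le_of_lt h1))), add_zero]

lemma colClear_diag (k : Fin m) (q : Fin m → R) (a : Fin m) :
    colClear k q a a = 1 := by
  rw [colClear_apply, Matrix.one_apply_eq,
    if_neg (by rintro ⟨h1, rfl⟩; exact lt_irrefl _ h1), add_zero]

lemma rowClear_mul_apply (k : Fin m) (q : Fin m → R) (B : Matrix (Fin m) (Fin m) R)
    (a b : Fin m) :
    (rowClear k q * B) a b = B a b + if k < a then q a * B k b else 0 := by
  rw [rowClear, add_mul, one_mul, Matrix.add_apply]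
  congr 1
  rw [Finset.sum_mul, Matrix.sum_apply]
  by_cases ha : k < a
  · rw [Finset.sum_eq_single_of_mem a (by simp [ha])
      (by intro i _ hi
          exact Matrix.single_mul_apply_of_ne _ _ _ _ _ hi.symm _),
      Matrix.single_mul_apply_same, if_pos ha]
  · rw [Finset.sum_eq_zero
      (by intro i hi
          refine Matrix.single_mul_apply_of_ne _ _ _ _ _ ?_ _
          rintro rfl
          exact ha (Finset.mem_filter.mp hi).2),
      if_neg ha]

lemma mul_colClear_apply (k : Fin m) (q : Fin m → R) (B : Matrix (Fin m) (Fin m) R)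
    (a b : Fin m) :
    (B * colClear k q) a b = B a b + if k < b then B a k * q b else 0 := by
  rw [colClear, mul_add, mul_one, Matrix.add_apply]
  congr 1
  rw [Finset.mul_sum, Matrix.sum_apply]
  by_cases hb : k < b
  · rw [Finset.sum_eq_single_of_mem b (by simp [hb])
      (by intro j _ hj
          exact Matrix.mul_single_apply_of_ne _ _ _ _ _ (Ne.symm hj) _),
      Matrix.mul_single_apply_same, if_pos hb]
  · rw [Finset.sum_eq_zero
      (by intro j hj
          refine Matrix.mul_single_apply_of_ne _ _ _ _ _ ?_ _
          rintro rfl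
          exact hb (Finset.mem_filter.mp hj).2),
      if_neg hb]

end Aux

namespace Aux

variable {K : Type} [Field K] {d : K → K} {R : Type} [Ring R] (S : DiffOpRing K d R)
  (hd_add : ∀ a b : K, d (a + b) = d a + d b)
  {n : ℕ} (deg : Matrix (Fin n) (Fin n) R → ℤ)

/-- a "good" matrix: a unit of degree zero. -/
def Good (P : Matrix (Fin n) (Fin n) R) : Prop := IsUnit P ∧ deg P = 0

variable (hdeg_mul : ∀ A B : Matrix (Fin n) (Fin n) R, Nondeg A → Nondeg B →
      deg (A * B) = deg A + deg B)
  (hdeg_tri : ∀ T : Matrix (Fin n) (Fin n) R, (∀ i j : Fin n, j < i → T i j = 0) →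
      (∀ i, T i i ≠ 0) → deg T = ∑ i, (S.ord (T i i) : ℤ))

include S hdeg_tri in
lemma deg_one : deg (1 : Matrix (Fin n) (Fin n) R) = 0 := by
  rw [hdeg_tri 1 (fun i j h => Matrix.one_apply_ne (Ne.symm (ne_of_lt h)))
    (fun i => by rw [Matrix.one_apply_eq]; exact one_ne S)]
  apply Finset.sum_eq_zero
  intro i _
  rw [Matrix.one_apply_eq, ord_one S]
  rfl

include hdeg_mul in
lemma good_mul {P Q : Matrix (Fin n) (Fin n) R} (hP : Good deg P) (hQ : Good deg Q) :
    Good deg (P * Q) := by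
  refine ⟨hP.1.mul hQ.1, ?_⟩
  rw [hdeg_mul P Q (isUnit_nondeg hP.1) (isUnit_nondeg hQ.1), hP.2, hQ.2]
  rfl

include S hdeg_mul hdeg_tri in
lemma good_Pm_invol {σ : Equiv.Perm (Fin n)} (h : σ * σ = 1) :
    Good deg (Pm σ : Matrix (Fin n) (Fin n) R) := by
  refine ⟨isUnit_Pm σ, ?_⟩
  have h2 : deg ((Pm σ : Matrix (Fin n) (Fin n) R) * Pm σ) = deg (Pm σ) + deg (Pm σ) :=
    hdeg_mul _ _ (isUnit_nondeg (isUnit_Pm σ)) (isUnit_nondeg (isUnit_Pm σ))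
  rw [Pm_mul_Pm, h, Pm_one, deg_one S deg hdeg_tri] at h2
  omega

include S hd_add hdeg_mul hdeg_tri in
lemma deg_lower {L : Matrix (Fin n) (Fin n) R}
    (hup : ∀ a b : Fin n, a < b → L a b = 0) (hdiag : ∀ a, L a a ≠ 0) :
    deg L = ∑ i, (S.ord (L i i) : ℤ) := by
  set σ : Equiv.Perm (Fin n) := Fin.revPerm with hσ
  have hinvol : σ * σ = 1 := by
    ext x
    simp [hσ, Fin.rev_rev]
  have hinv : σ⁻¹ = σ := by
    have := congrArg (fun τ => σ⁻¹ * τ) hinvol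
    simpa [mul_assoc] using this.symm
  set U : Matrix (Fin n) (Fin n) R := Pm σ * L * Pm σ with hU
  have hUapp : ∀ a b, U a b = L (σ a) (σ b) := by
    intro a b
    rw [hU, Pm_sandwich, hinv]
  have hUup : ∀ i j : Fin n, j < i → U i j = 0 := by
    intro i j hji
    rw [hUapp]
    exact hup _ _ (by simpa [hσ, Fin.rev_lt_rev] using hji)
  have hUdiag : ∀ i, U i i ≠ 0 := fun i => by rw [hUapp]; exact hdiag _
  have hLU : L = Pm σ * U * Pm σ := by
    rw [hU]
    rw [show (Pm σ * (Pm σ * L * Pm σ) * Pm σ : Matrix (Fin n) (Fin n) R)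
      = (Pm σ * Pm σ) * L * (Pm σ * Pm σ) by simp only [mul_assoc]]
    rw [Pm_mul_Pm, hinvol, Pm_one, one_mul, mul_one]
  have hNU : Nondeg U := nondeg_of_upper S hd_add hUup hUdiag
  have hNP : Nondeg (Pm σ : Matrix (Fin n) (Fin n) R) := isUnit_nondeg (isUnit_Pm σ)
  have hd1 : deg L = deg (Pm σ * U) + deg (Pm σ) := by
    rw [hLU]; exact hdeg_mul _ _ (nondeg_mul hNP hNU) hNP
  rw [hdeg_mul _ _ hNP hNU] at hd1
  rw [(good_Pm_invol S deg hdeg_mul hdeg_tri hinvol).2] at hd1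
  rw [hdeg_tri U hUup hUdiag] at hd1
  rw [hd1]
  have : ∑ i, (S.ord (U i i) : ℤ) = ∑ i, (S.ord (L i i) : ℤ) := by
    rw [Finset.sum_congr rfl (fun i _ => by rw [hUapp])]
    exact Fintype.sum_equiv σ (fun i => (S.ord (L (σ i) (σ i)) : ℤ))
      (fun i => (S.ord (L i i) : ℤ)) (fun i => rfl)
  omega

include S hd_add hdeg_mul hdeg_tri in
lemma good_rowClear (k : Fin n) (q : Fin n → R) : Good deg (rowClear k q) := by
  refine ⟨isUnit_rowClear k q, ?_⟩
  rw [deg_lower S hd_add deg hdeg_mul hdeg_tri (rowClear_lower k q)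
     (fun a => by rw [rowClear_diag]; exact one_ne S)]
  apply Finset.sum_eq_zero
  intro i _
  rw [rowClear_diag, ord_one S]
  rfl

include S hdeg_tri in
lemma good_colClear (k : Fin n) (q : Fin n → R) : Good deg (colClear k q) := by
  refine ⟨isUnit_colClear k q, ?_⟩
  rw [hdeg_tri _ (fun i j h => colClear_upper k q i j h)
     (fun a => by rw [colClear_diag]; exact one_ne S)]
  apply Finset.sum_eq_zero
  intro i _
  rw [colClear_diag, ord_one S]
  rfl

/-- first `k` rows and columns are zero off the diagonal, with nonzero diagonal there -/
def Tri (k : ℕ) (B : Matrix (Fin n) (Fin n) R) : Prop :=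
  (∀ i j : Fin n, i ≠ j → (i.val < k ∨ j.val < k) → B i j = 0)
    ∧ ∀ i : Fin n, i.val < k → B i i ≠ 0

lemma swap_ge {k : ℕ} (a b y : Fin n) (ha : k ≤ a.val) (hb : k ≤ b.val) (hy : k ≤ y.val) :
    k ≤ (Equiv.swap a b y).val := by
  by_cases h1 : y = a
  · rw [h1, Equiv.swap_apply_left]; exact hb
  by_cases h2 : y = b
  · rw [h2, Equiv.swap_apply_right]; exact ha
  · rw [Equiv.swap_apply_of_ne_of_ne h1 h2]; exact hy

lemma swap_lt {k : ℕ} (a b y : Fin n) (ha : k ≤ a.val) (hb : k ≤ b.val) (hy : y.val < k) :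
    Equiv.swap a b y = y := by
  apply Equiv.swap_apply_of_ne_of_ne
  · exact fun h => by subst h; omega
  · exact fun h => by subst h; omega

lemma tri_swap {k : ℕ} {B : Matrix (Fin n) (Fin n) R} (hB : Tri k B)
    {a b a' b' : Fin n} (ha : k ≤ a.val) (hb : k ≤ b.val) (ha' : k ≤ a'.val)
    (hb' : k ≤ b'.val) :
    Tri k (Pm (Equiv.swap a b) * B * Pm (Equiv.swap a' b')) := by
  have happ : ∀ x y, (Pm (Equiv.swap a b) * B * Pm (Equiv.swap a' b')
        : Matrix (Fin n) (Fin n) R) x y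
      = B (Equiv.swap a b x) (Equiv.swap a' b' y) := by
    intro x y
    rw [Pm_sandwich, Equiv.swap_inv]
  constructor
  · intro x y hxy hlt
    rw [happ]
    rcases hlt with hx | hy
    · rw [swap_lt a b x ha hb hx]
      by_cases hyk : y.val < k
      · rw [swap_lt a' b' y ha' hb' hyk]
        exact hB.1 x y hxy (Or.inl hx)
      · have := swap_ge a' b' y ha' hb' (by omega)
        exact hB.1 x _ (by intro h; rw [h] at hx; omega) (Or.inl hx)
    · rw [swap_lt a' b' y ha' hb' hy]
      by_cases hxk : x.val < k
      · rw [swap_lt a b x ha hb hxk]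
        exact hB.1 x y hxy (Or.inr hy)
      · have := swap_ge a b x ha hb (by omega)
        exact hB.1 _ y (by intro h; rw [← h] at hy; omega) (Or.inr hy)
  · intro x hx
    rw [happ, swap_lt a b x ha hb hx, swap_lt a' b' x ha' hb' hx]
    exact hB.2 x hx

include S in
lemma exists_pivot {k : ℕ} (hk : k < n) {B : Matrix (Fin n) (Fin n) R}
    (hB : Nondeg B) (hT : Tri k B) :
    ∃ i j : Fin n, k ≤ i.val ∧ k ≤ j.val ∧ B i j ≠ 0 := by
  by_contra h
  push_neg at h
  set kk : Fin n := ⟨k, hk⟩ with hkk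
  have hcol : ∀ i, B i kk = 0 := by
    intro i
    by_cases hik : i.val < k
    · refine hT.1 i kk ?_ (Or.inl hik)
      intro hh
      rw [hh, show kk.val = k from rfl] at hik
      omega
    · exact h i kk (by omega) (by simp [hkk])
  have hX : B.mulVec (Pi.single kk (1 : R)) = 0 := by
    funext i
    rw [mulVec_single, hcol]
    rfl
  have := congrFun (hB _ hX) kk
  rw [Pi.single_eq_same] at this
  exact one_ne S this

include S hd_add hdeg_mul hdeg_tri in
lemma clear_aux {k : ℕ} (hk : k < n) (B : Matrix (Fin n) (Fin n) R)
    (hNon : Nondeg B) (hT : Tri k B) (hp : B ⟨k, hk⟩ ⟨k, hk⟩ ≠ 0) :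
    (∃ P Q, Good deg P ∧ Good deg Q ∧ Tri (k+1) (P * B * Q)) ∨
    (∃ P Q B', Good deg P ∧ Good deg Q ∧ B' = P * B * Q ∧ Nondeg B' ∧ Tri k B'
      ∧ B' ⟨k, hk⟩ ⟨k, hk⟩ ≠ 0
      ∧ S.ord (B' ⟨k, hk⟩ ⟨k, hk⟩) < S.ord (B ⟨k, hk⟩ ⟨k, hk⟩)) := by
  set kk : Fin n := ⟨k, hk⟩ with hkk
  have hkkv : kk.val = k := rfl
  set p : R := B kk kk with hpdef
  have hltkk : ∀ y : Fin n, (kk < y ↔ k < y.val) := by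
    intro y; rw [Fin.lt_def, hkkv]
  -- row clearing quotients
  have hqr : ∀ i : Fin n, ∃ q : R, ∀ j, S.ord p ≤ j → S.coeff (B i kk - q * p) j = 0 :=
    fun i => div_left S hd_add hp (B i kk)
  choose qr hqrs using hqr
  have hqc : ∀ j : Fin n, ∃ q : R, ∀ jj, S.ord p ≤ jj → S.coeff (B kk j - p * q) jj = 0 :=
    fun j => div_right S hd_add hp (B kk j)
  choose qc hqcs using hqc
  set RC := rowClear kk (fun i => -(qr i)) with hRC
  set CC := colClear kk (fun j => -(qc j)) with hCC
  set B2 := RC * B with hB2def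
  set B3 := B2 * CC with hB3def
  have hB2 : ∀ a b, B2 a b = B a b + (if kk < a then -(qr a) * B kk b else 0) := by
    intro a b; rw [hB2def, hRC, rowClear_mul_apply]
  have hB3 : ∀ a b, B3 a b = B2 a b + (if kk < b then B2 a kk * (-(qc b)) else 0) := by
    intro a b; rw [hB3def, hCC, mul_colClear_apply]
  have hB2row : ∀ b, B2 kk b = B kk b := by
    intro b; rw [hB2, if_neg (lt_irrefl kk), add_zero]
  have hB3colk : ∀ a, B3 a kk = B2 a kk := by
    intro a; rw [hB3, if_neg (lt_irrefl kk), add_zero]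
  have hB3p : B3 kk kk = p := by rw [hB3colk, hB2row]
  have hB3r : ∀ b, kk < b → B3 kk b = B kk b - p * qc b := by
    intro b hb
    rw [hB3, if_pos hb, hB2row, hB2row, mul_neg, ← sub_eq_add_neg]
  have hB3c : ∀ a, kk < a → B3 a kk = B a kk - qr a * p := by
    intro a ha
    rw [hB3colk, hB2, if_pos ha, neg_mul, ← sub_eq_add_neg]
  have hTri2 : Tri k B2 := by
    constructor
    · intro x y hxy hlt
      rcases hlt with hx | hy
      · rw [hB2, if_neg (fun hc => by rw [hltkk] at hc; omega), add_zero]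
        exact hT.1 x y hxy (Or.inl hx)
      · rw [hB2, hT.1 x y hxy (Or.inr hy),
          hT.1 kk y (fun hc => by rw [← hc, hkkv] at hy; omega) (Or.inr hy)]
        simp
    · intro x hx
      rw [hB2, if_neg (fun hc => by rw [hltkk] at hc; omega), add_zero]
      exact hT.2 x hx
  have hTri3 : Tri k B3 := by
    constructor
    · intro x y hxy hlt
      rcases hlt with hx | hy
      · rw [hB3, hTri2.1 x y hxy (Or.inl hx)]
        by_cases hyk : kk < y
        · rw [if_pos hyk,
            hTri2.1 x kk (fun hc => by rw [hc, hkkv] at hx; omega) (Or.inl hx)]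
          simp
        · rw [if_neg hyk]; simp
      · rw [hB3, if_neg (fun hc => by rw [hltkk] at hc; omega), add_zero]
        exact hTri2.1 x y hxy (Or.inr hy)
    · intro x hx
      rw [hB3, if_neg (fun hc => by rw [hltkk] at hc; omega), add_zero]
      exact hTri2.2 x hx
  have hNon3 : Nondeg B3 := by
    rw [hB3def, hB2def]
    exact nondeg_mul (nondeg_mul (isUnit_nondeg (isUnit_rowClear _ _)) hNon)
      (isUnit_nondeg (isUnit_colClear _ _))
  have hGoodRC : Good deg RC := good_rowClear S hd_add deg hdeg_mul hdeg_tri _ _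
  have hGoodCC : Good deg CC := good_colClear S deg hdeg_tri _ _
  by_cases hrow : ∀ i, kk < i → B3 i kk = 0
  · by_cases hcol : ∀ j, kk < j → B3 kk j = 0
    · left
      refine ⟨RC, CC, hGoodRC, hGoodCC, ?_⟩
      have hPBQ : RC * B * CC = B3 := by rw [hB3def, hB2def]
      rw [hPBQ]
      constructor
      · intro x y hxy hlt
        by_cases hx : x.val < k
        · exact hTri3.1 x y hxy (Or.inl hx)
        by_cases hy : y.val < k
        · exact hTri3.1 x y hxy (Or.inr hy)
        have hx1 : k ≤ x.val := by omega
        have hy1 : k ≤ y.val := by omega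
        rcases hlt with hxk | hyk
        · have hxkk : x = kk := Fin.ext (by omega)
          have : kk < y := by
            rw [hltkk]
            rcases Nat.lt_or_ge k y.val with h | h
            · exact h
            · exfalso; exact hxy (by rw [hxkk]; exact (Fin.ext (by omega)).symm)
          rw [hxkk]
          exact hcol y this
        · have hykk : y = kk := Fin.ext (by omega)
          have : kk < x := by
            rw [hltkk]
            rcases Nat.lt_or_ge k x.val with h | h
            · exact h
            · exfalso; exact hxy (by rw [hykk]; exact Fin.ext (by omega))
          rw [hykk]
          exact hrow x this
      · intro x hx
        by_cases hxk : x.val < k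
        · exact hTri3.2 x hxk
        · have hxkk : x = kk := Fin.ext (by omega)
          rw [hxkk, hB3p]
          exact hp
    · right
      push_neg at hcol
      obtain ⟨j0, hj0, hj0ne⟩ := hcol
      have hbd : ∀ jj, S.ord p ≤ jj → S.coeff (B3 kk j0) jj = 0 := by
        intro jj hjj
        rw [hB3r j0 hj0]
        exact hqcs j0 jj hjj
      have hordlt : S.ord (B3 kk j0) < S.ord p := by
        by_contra hge
        exact lc_ne_zero S hj0ne (hbd _ (by omega))
      set τ := Equiv.swap kk j0 with hτ
      set σ := Equiv.swap kk kk with hσ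
      set B4 := Pm σ * B3 * Pm τ with hB4def
      have hB4app : ∀ x y, B4 x y = B3 (σ x) (τ y) := by
        intro x y
        rw [hB4def, Pm_sandwich, hσ, Equiv.swap_inv]
      have hB4p : B4 kk kk = B3 kk j0 := by
        rw [hB4app, hσ, hτ, Equiv.swap_self]
        simp [Equiv.swap_apply_left]
      refine ⟨Pm σ * RC, CC * Pm τ, B4, ?_, ?_, ?_, ?_, ?_, ?_, ?_⟩
      · exact good_mul deg hdeg_mul
          (good_Pm_invol S deg hdeg_mul hdeg_tri (Equiv.swap_mul_self _ _)) hGoodRC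
      · exact good_mul deg hdeg_mul hGoodCC
          (good_Pm_invol S deg hdeg_mul hdeg_tri (Equiv.swap_mul_self _ _))
      · rw [hB4def, hB3def, hB2def]
        simp only [mul_assoc]
      · rw [hB4def]
        exact nondeg_mul (nondeg_mul (isUnit_nondeg (isUnit_Pm σ)) hNon3)
          (isUnit_nondeg (isUnit_Pm τ))
      · rw [hB4def, hσ, hτ]
        exact tri_swap hTri3 (le_refl k) (le_refl k) (le_refl k)
          (le_of_lt ((hltkk j0).mp hj0))
      · rw [hB4p]; exact hj0ne
      · rw [hB4p]; exact hordlt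
  · right
    push_neg at hrow
    obtain ⟨i0, hi0, hi0ne⟩ := hrow
    have hbd : ∀ jj, S.ord p ≤ jj → S.coeff (B3 i0 kk) jj = 0 := by
      intro jj hjj
      rw [hB3c i0 hi0]
      exact hqrs i0 jj hjj
    have hordlt : S.ord (B3 i0 kk) < S.ord p := by
      by_contra hge
      exact lc_ne_zero S hi0ne (hbd _ (by omega))
    set σ := Equiv.swap kk i0 with hσ
    set τ := Equiv.swap kk kk with hτ
    set B4 := Pm σ * B3 * Pm τ with hB4def
    have hB4app : ∀ x y, B4 x y = B3 (σ x) (τ y) := by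
      intro x y
      rw [hB4def, Pm_sandwich, hσ, Equiv.swap_inv]
    have hB4p : B4 kk kk = B3 i0 kk := by
      rw [hB4app, hσ, hτ, Equiv.swap_self]
      simp [Equiv.swap_apply_left]
    refine ⟨Pm σ * RC, CC * Pm τ, B4, ?_, ?_, ?_, ?_, ?_, ?_, ?_⟩
    · exact good_mul deg hdeg_mul
        (good_Pm_invol S deg hdeg_mul hdeg_tri (Equiv.swap_mul_self _ _)) hGoodRC
    · exact good_mul deg hdeg_mul hGoodCC
        (good_Pm_invol S deg hdeg_mul hdeg_tri (Equiv.swap_mul_self _ _))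
    · rw [hB4def, hB3def, hB2def]
      simp only [mul_assoc]
    · rw [hB4def]
      exact nondeg_mul (nondeg_mul (isUnit_nondeg (isUnit_Pm σ)) hNon3)
        (isUnit_nondeg (isUnit_Pm τ))
    · rw [hB4def, hσ, hτ]
      exact tri_swap hTri3 (le_refl k) (le_of_lt ((hltkk i0).mp hi0)) (le_refl k) (le_refl k)
    · rw [hB4p]; exact hi0ne
    · rw [hB4p]; exact hordlt

include S hd_add hdeg_mul hdeg_tri in
lemma clear_step {k : ℕ} (hk : k < n) :
    ∀ N (B : Matrix (Fin n) (Fin n) R), Nondeg B → Tri k B →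
      B ⟨k, hk⟩ ⟨k, hk⟩ ≠ 0 → S.ord (B ⟨k, hk⟩ ⟨k, hk⟩) ≤ N →
      ∃ P Q, Good deg P ∧ Good deg Q ∧ Tri (k+1) (P * B * Q) := by
  intro N
  induction N with
  | zero =>
    intro B hNon hT hp hord
    rcases clear_aux S hd_add deg hdeg_mul hdeg_tri hk B hNon hT hp with h | h
    · exact h
    · obtain ⟨P, Q, B', _, _, _, _, _, _, hlt⟩ := h
      omega
  | succ N ih =>
    intro B hNon hT hp hord
    rcases clear_aux S hd_add deg hdeg_mul hdeg_tri hk B hNon hT hp with h | h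
    · exact h
    · obtain ⟨P, Q, B', hGP, hGQ, hEq, hNon', hT', hp', hlt⟩ := h
      obtain ⟨P', Q', hGP', hGQ', hT''⟩ := ih B' hNon' hT' hp' (by omega)
      refine ⟨P' * P, Q * Q', good_mul deg hdeg_mul hGP' hGP,
        good_mul deg hdeg_mul hGQ hGQ', ?_⟩
      have : P' * P * B * (Q * Q') = P' * B' * Q' := by
        rw [hEq]
        simp only [mul_assoc]
      rw [this]
      exact hT''

include S hd_add hdeg_mul hdeg_tri in
lemma triangularize (A : Matrix (Fin n) (Fin n) R) (hA : Nondeg A) :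
    ∀ k, k ≤ n → ∃ P Q, Good deg P ∧ Good deg Q ∧ Tri k (P * A * Q) := by
  intro k
  induction k with
  | zero =>
    intro _
    refine ⟨1, 1, ⟨isUnit_one, deg_one S deg hdeg_tri⟩, ⟨isUnit_one, deg_one S deg hdeg_tri⟩, ?_⟩
    rw [one_mul, mul_one]
    exact ⟨fun i j _ h => by omega, fun i h => by omega⟩
  | succ k ih =>
    intro hk1
    have hk : k < n := by omega
    obtain ⟨P, Q, hGP, hGQ, hT⟩ := ih (by omega)
    set B := P * A * Q with hBdef
    have hNonB : Nondeg B := by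
      rw [hBdef]
      exact nondeg_mul (nondeg_mul (isUnit_nondeg hGP.1) hA) (isUnit_nondeg hGQ.1)
    obtain ⟨i0, j0, hi0, hj0, hne⟩ := exists_pivot S hk hNonB hT
    set kk : Fin n := ⟨k, hk⟩ with hkk
    set σ := Equiv.swap kk i0 with hσ
    set τ := Equiv.swap kk j0 with hτ
    set B' := Pm σ * B * Pm τ with hB'def
    have hT' : Tri k B' := by
      rw [hB'def, hσ, hτ]
      exact tri_swap hT (le_refl k) hi0 (le_refl k) hj0
    have hB'p : B' kk kk = B i0 j0 := by
      rw [hB'def, Pm_sandwich, hσ, hτ, Equiv.swap_inv]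
      rw [Equiv.swap_apply_left, Equiv.swap_apply_left]
    have hNonB' : Nondeg B' := by
      rw [hB'def]
      exact nondeg_mul (nondeg_mul (isUnit_nondeg (isUnit_Pm σ)) hNonB)
        (isUnit_nondeg (isUnit_Pm τ))
    have hp' : B' ⟨k, hk⟩ ⟨k, hk⟩ ≠ 0 := by rw [← hkk, hB'p]; exact hne
    obtain ⟨P', Q', hGP', hGQ', hT''⟩ := clear_step S hd_add deg hdeg_mul hdeg_tri hk
      (S.ord (B' ⟨k, hk⟩ ⟨k, hk⟩)) B' hNonB' hT' hp' (le_refl _)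
    refine ⟨P' * (Pm σ * P), (Q * Pm τ) * Q',
      good_mul deg hdeg_mul hGP'
        (good_mul deg hdeg_mul (good_Pm_invol S deg hdeg_mul hdeg_tri (Equiv.swap_mul_self _ _)) hGP),
      good_mul deg hdeg_mul
        (good_mul deg hdeg_mul hGQ (good_Pm_invol S deg hdeg_mul hdeg_tri (Equiv.swap_mul_self _ _))) hGQ', ?_⟩
    have : P' * (Pm σ * P) * A * ((Q * Pm τ) * Q') = P' * B' * Q' := by
      rw [hB'def, hBdef]
      simp only [mul_assoc]
    rw [this]
    exact hT''

end Aux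

/-- Let K be a differential field of characteristic 0 and A ∈ M_n(K[∂])
non-degenerate. Then A is invertible in M_n(K[∂]) iff the degree d(A) of its Dieudonné
determinant is zero; moreover d(A) ≥ 0 always. Here `deg` is any function satisfying
the characterizing properties of the degree of the Dieudonné determinant:
multiplicativity on non-degenerate matrices, and on upper triangular matrices with
non-zero diagonal it is the sum of the orders of the diagonal entries. -/
theorem stmt_14 (K : Type) [Field K] [CharZero K] (d : K → K)
    (hd_add : ∀ a b : K, d (a + b) = d a + d b)
    (hd_mul : ∀ a b : K, d (a * b) = a * d b + d a * b)
    (R : Type) [Ring R] (S : DiffOpRing K d R)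
    (n : ℕ) (deg : Matrix (Fin n) (Fin n) R → ℤ)
    (hdeg_mul : ∀ A B : Matrix (Fin n) (Fin n) R, Nondeg A → Nondeg B →
      deg (A * B) = deg A + deg B)
    (hdeg_tri : ∀ T : Matrix (Fin n) (Fin n) R, (∀ i j : Fin n, j < i → T i j = 0) →
      (∀ i, T i i ≠ 0) → deg T = ∑ i, (S.ord (T i i) : ℤ))
    (A : Matrix (Fin n) (Fin n) R) (hA : Nondeg A) :
    0 ≤ deg A ∧ (IsUnit A ↔ deg A = 0) := by
  classical
  have degnn : ∀ M : Matrix (Fin n) (Fin n) R, Nondeg M → 0 ≤ deg M := by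
    intro M hM
    obtain ⟨P, Q, hGP, hGQ, hT⟩ :=
      Aux.triangularize S hd_add deg hdeg_mul hdeg_tri M hM n (le_refl n)
    have hupper : ∀ i j : Fin n, j < i → (P * M * Q) i j = 0 :=
      fun i j h => hT.1 i j (Ne.symm (ne_of_lt h)) (Or.inr j.isLt)
    have hdiag : ∀ i, (P * M * Q) i i ≠ 0 := fun i => hT.2 i i.isLt
    have h1 := hdeg_mul (P * M) Q
      (Aux.nondeg_mul (Aux.isUnit_nondeg hGP.1) hM) (Aux.isUnit_nondeg hGQ.1)
    have h2 := hdeg_mul P M (Aux.isUnit_nondeg hGP.1) hM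
    have h3 := hdeg_tri _ hupper hdiag
    have h4 : 0 ≤ ∑ i, (S.ord ((P * M * Q) i i) : ℤ) :=
      Finset.sum_nonneg fun i _ => Int.natCast_nonneg _
    rw [h2] at h1
    rw [h3, hGP.2, hGQ.2] at h1
    omega
  refine ⟨degnn A hA, ?_, ?_⟩
  · intro hu
    obtain ⟨u, hu⟩ := hu
    have hNinv : Nondeg (u⁻¹.val) := Aux.isUnit_nondeg (Units.isUnit u⁻¹)
    have h1 : deg (A * u⁻¹.val) = deg A + deg u⁻¹.val := hdeg_mul _ _ hA hNinv
    have h2 : A * u⁻¹.val = 1 := by rw [← hu]; exact u.mul_inv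
    rw [h2, Aux.deg_one S deg hdeg_tri] at h1
    have h5 := degnn _ hNinv
    have h6 := degnn A hA
    omega
  · intro h0
    obtain ⟨P, Q, hGP, hGQ, hT⟩ :=
      Aux.triangularize S hd_add deg hdeg_mul hdeg_tri A hA n (le_refl n)
    set T := P * A * Q with hTdef
    have hupper : ∀ i j : Fin n, j < i → T i j = 0 :=
      fun i j h => hT.1 i j (Ne.symm (ne_of_lt h)) (Or.inr j.isLt)
    have hdiag : ∀ i, T i i ≠ 0 := fun i => hT.2 i i.isLt
    have h1 := hdeg_mul (P * A) Q
      (Aux.nondeg_mul (Aux.isUnit_nondeg hGP.1) hA) (Aux.isUnit_nondeg hGQ.1)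
    have h2 := hdeg_mul P A (Aux.isUnit_nondeg hGP.1) hA
    have h3 := hdeg_tri T hupper hdiag
    have hsum : ∑ i, (S.ord (T i i) : ℤ) = 0 := by
      rw [← h3, hTdef]
      rw [h1, h2, hGP.2, hGQ.2, h0]
      ring
    have hord0 : ∀ i, S.ord (T i i) = 0 := by
      intro i
      have := (Finset.sum_eq_zero_iff_of_nonneg
        (fun i _ => Int.natCast_nonneg (S.ord (T i i)))).mp hsum i (Finset.mem_univ i)
      exact_mod_cast this
    set c : Fin n → K := fun i => S.coeff (T i i) 0 with hc
    have hc0 : ∀ i, c i ≠ 0 := by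
      intro i
      have := Aux.lc_ne_zero S (hdiag i)
      rwa [hord0 i] at this
    have hTc : ∀ i, T i i = S.ι (c i) := fun i => Aux.eq_iota_of_ord_eq_zero S (hord0 i)
    have hTdiag : T = Matrix.diagonal (fun i => S.ι (c i)) := by
      ext a b
      by_cases hab : a = b
      · subst hab
        rw [Matrix.diagonal_apply_eq]
        exact hTc a
      · rw [Matrix.diagonal_apply_ne _ hab]
        exact hT.1 a b hab (Or.inl a.isLt)
    have hTunit : IsUnit T := by
      refine ⟨⟨T, Matrix.diagonal (fun i => S.ι (c i)⁻¹), ?_, ?_⟩, rfl⟩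
      · rw [hTdiag, Matrix.diagonal_mul_diagonal]
        rw [show (fun i => S.ι (c i) * S.ι (c i)⁻¹) = fun i => (1 : R) by
          funext i; rw [← map_mul, mul_inv_cancel₀ (hc0 i), map_one]]
        exact Matrix.diagonal_one
      · rw [hTdiag, Matrix.diagonal_mul_diagonal]
        rw [show (fun i => S.ι (c i)⁻¹ * S.ι (c i)) = fun i => (1 : R) by
          funext i; rw [← map_mul, inv_mul_cancel₀ (hc0 i), map_one]]
        exact Matrix.diagonal_one
    obtain ⟨uP, huP⟩ := hGP.1
    obtain ⟨uQ, huQ⟩ := hGQ.1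
    have hAeq : A = uP⁻¹.val * T * uQ⁻¹.val := by
      rw [hTdef, ← huP, ← huQ]
      rw [show uP⁻¹.val * (uP.val * A * uQ.val) * uQ⁻¹.val
        = (uP⁻¹.val * uP.val) * A * (uQ.val * uQ⁻¹.val) by simp only [mul_assoc]]
      rw [Units.inv_mul, Units.mul_inv, one_mul, mul_one]
    rw [hAeq]
    exact ((Units.isUnit uP⁻¹).mul hTunit).mul (Units.isUnit uQ⁻¹)
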